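/- With the setting of the rough-geodesic discretization: (X,d) a C_X-roughly geodesic ε-good δ-hyperbolic space, basepoint o, upper Gromov bound constant M, R > 5C_X, x ∈ X with nR ≤ d(o,x) < (n+1)R, and discretization points x_k on a rough geodesic from o to θ(x) with kR + C_X ≤ d(o,x_k) ≤ kR + 3C_X. There exists a constant C > 0, depending only on R, C_X, M, δ, such that for all k ∈ {0,…,n}: (n−k)R − C ≤ d(x_k, x) ≤ (n−k)R + C. -/
import Mathlib


/-- distance estimates d(x_k, x) = (n−k)R ± C for the discretization
points, with a constant C depending only on R, C_X, M, δ. -/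
theorem stmt_2
    (R CX M δ : ℝ) (hR : R > 5 * CX) (hCX : 0 ≤ CX) (hM : 0 ≤ M) (hδ : 0 ≤ δ) :
    ∃ C > 0, ∀ (X : Type) (_ : MetricSpace X), ∀ (o x : X) (n : ℕ) (xk : ℕ → X),
      (n : ℝ) * R ≤ dist o x → dist o x < ((n : ℝ) + 1) * R →
      -- the discretization points satisfy kR + C_X ≤ d(o,x_k) ≤ kR + 3C_X
      (∀ k : ℕ, k ≤ n →
        (k : ℝ) * R + CX ≤ dist o (xk k) ∧ dist o (xk k) ≤ (k : ℝ) * R + 3 * CX) →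
      -- rough-geodesic estimate: d(x_k, x_n) is within C_X of (n−k)R
      (∀ k : ℕ, k ≤ n → |dist (xk k) (xk n) - ((n : ℝ) - (k : ℝ)) * R| ≤ CX) →
      -- previously established: (x_n, x)_o ≥ nR − M − δ
      (dist o (xk n) + dist o x - dist (xk n) x) / 2 ≥ (n : ℝ) * R - M - δ →
      ∀ k : ℕ, k ≤ n →
        ((n : ℝ) - (k : ℝ)) * R - C ≤ dist (xk k) x ∧
        dist (xk k) x ≤ ((n : ℝ) - (k : ℝ)) * R + C := by
  have hR0 : 0 < R := lt_of_le_of_lt (by linarith) hR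
  refine ⟨R + 7 * CX + 2 * M + 2 * δ, by linarith, ?_⟩
  intro X _ o x n xk h1 h2 h3 h4 h5 k hk
  obtain ⟨hk1, hk2⟩ := h3 k hk
  obtain ⟨hn1, hn2⟩ := h3 n le_rfl
  have habs := abs_le.mp (h4 k hk)
  have htri1 : dist o x ≤ dist o (xk k) + dist (xk k) x := dist_triangle o (xk k) x
  have htri2 : dist (xk k) x ≤ dist (xk k) (xk n) + dist (xk n) x := dist_triangle _ _ _
  constructor
  · linarith [habs.1, habs.2]
  · linarith [habs.1, habs.2]
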